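/- Let S and C be real symmetric n×n matrices with |c_{ij}| ≤ s_{ij} for all i,j, and 0 ≤ γ ≤ 1. Then the 2n×2n matrix M_γ with 2×2 blocks [[ (s_{ij}+γc_{ij})/2, (s_{ij}−γc_{ij})/2 ],[ (s_{ij}−γc_{ij})/2, (s_{ij}+γc_{ij})/2 ]] is a symmetric nonnegative matrix whose eigenvalue multiset is σ(S) ∪ γ·σ(C). -/

import Mathlib

open Matrix Polynomial

lemma det_fromBlocks_self {R : Type*} [CommRing R] {m : Type*} [Fintype m] [DecidableEq m]
    (P Q : Matrix m m R) :
    (fromBlocks P Q Q P).det = (P + Q).det * (P - Q).det := by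
  have key : fromBlocks (1 : Matrix m m R) 1 0 1 * fromBlocks P Q Q P *
      fromBlocks 1 (-1) 0 1 = fromBlocks (P + Q) 0 Q (P - Q) := by
    rw [fromBlocks_multiply, fromBlocks_multiply]
    simp only [Matrix.mul_one, Matrix.one_mul, Matrix.zero_mul, Matrix.mul_zero,
      Matrix.mul_neg, add_zero, zero_add]
    congr 1 <;> abel
  have h2 := congrArg Matrix.det key
  rw [det_mul, det_mul, det_fromBlocks_zero₂₁, det_fromBlocks_zero₂₁,
    det_fromBlocks_zero₁₂] at h2
  simpa using h2

lemma charpoly_fromBlocks_self {R : Type*} [CommRing R] {m : Type*} [Fintype m] [DecidableEq m]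
    (A B : Matrix m m R) :
    (fromBlocks A B B A).charpoly = (A + B).charpoly * (A - B).charpoly := by
  have hadd : charmatrix A + -B.map C = charmatrix (A + B) := by
    ext i j
    simp [charmatrix_apply, Matrix.map_apply, Matrix.diagonal]
    ring
  have hsub : charmatrix A - -B.map C = charmatrix (A - B) := by
    ext i j
    simp [charmatrix_apply, Matrix.map_apply, Matrix.diagonal]
    ring
  rw [Matrix.charpoly, charmatrix_fromBlocks, det_fromBlocks_self, hadd, hsub]
  rfl

lemma roots_charpoly_smul {m : Type*} [Fintype m] [DecidableEq m]
    (A : Matrix m m ℂ) (γ : ℂ) :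
    (γ • A).charpoly.roots = A.charpoly.roots.map (fun z => γ * z) := by
  have hsplit : A.charpoly.Splits := IsAlgClosed.splits _
  have hcard : Multiset.card A.charpoly.roots = Fintype.card m := by
    rw [splits_iff_card_roots.mp hsplit, Matrix.charpoly_natDegree_eq_dim]
  rcases eq_or_ne γ 0 with rfl | hγ
  · have hz : (0 : ℂ) • A = 0 := zero_smul _ _
    have hch : (0 : Matrix m m ℂ).charpoly = X ^ Fintype.card m := by
      rw [Matrix.charpoly]
      have : charmatrix (0 : Matrix m m ℂ) = Matrix.diagonal fun _ => (X : ℂ[X]) := by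
        ext i j
        by_cases hij : i = j <;> simp [hij, charmatrix_apply, Matrix.diagonal]
      rw [this, Matrix.det_diagonal, Finset.prod_const, Finset.card_univ]
    rw [hz, hch, roots_pow, roots_X]
    simp [Multiset.map_const', hcard, Multiset.nsmul_singleton]
  · have hp := hsplit.eq_prod_roots_of_monic (Matrix.charpoly_monic A)
    set p := A.charpoly with hpdef
    set g : ℂ[X] →+* ℂ[X] := eval₂RingHom Polynomial.C (Polynomial.C γ⁻¹ * X) with hg
    have hgX : g X = Polynomial.C γ⁻¹ * X := by simp [hg]
    have hgC : ∀ a : ℂ, g (Polynomial.C a) = Polynomial.C a := by intro a; simp [hg]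
    have hmat : charmatrix (γ • A) = Polynomial.C γ • (charmatrix A).map g := by
      ext i j : 2
      by_cases hij : i = j
      · subst hij
        simp only [charmatrix_apply_eq, Matrix.smul_apply, Matrix.map_apply, map_sub, hgX, hgC,
          smul_eq_mul, mul_sub, ← mul_assoc, ← Polynomial.C_mul, mul_inv_cancel₀ hγ,
          Polynomial.C_1, one_mul]
      · simp only [charmatrix_apply_ne _ _ _ hij, Matrix.smul_apply, Matrix.map_apply, map_neg,
          hgC, smul_eq_mul, mul_neg, ← Polynomial.C_mul]
    have hkey : (γ • A).charpoly = Polynomial.C γ ^ Fintype.card m * g p := by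
      rw [Matrix.charpoly, hmat, Matrix.det_smul]
      congr 1
      rw [hpdef, Matrix.charpoly, RingHom.map_det]
      rfl
    have hgp : g p = Polynomial.C γ⁻¹ ^ Fintype.card m *
        ((p.roots.map fun r => X - Polynomial.C (γ * r)).prod) := by
      conv_lhs => rw [hp]
      rw [map_multiset_prod, Multiset.map_map]
      have hstep : ∀ r : ℂ, g (X - Polynomial.C r) =
          Polynomial.C γ⁻¹ * (X - Polynomial.C (γ * r)) := by
        intro r
        rw [map_sub, hgX, hgC, mul_sub, ← Polynomial.C_mul, inv_mul_cancel_left₀ hγ]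
      simp only [Function.comp, hstep]
      rw [Multiset.prod_map_mul, Multiset.map_const', Multiset.prod_replicate, hcard]
    have hfin : (γ • A).charpoly = (p.roots.map fun r => X - Polynomial.C (γ * r)).prod := by
      rw [hkey, hgp, ← mul_assoc, ← mul_pow, ← Polynomial.C_mul, mul_inv_cancel₀ hγ]
      simp
    have hmm : Multiset.map (fun r => X - Polynomial.C (γ * r)) p.roots =
        Multiset.map (fun a => X - Polynomial.C a) (p.roots.map fun z => γ * z) := by
      rw [Multiset.map_map]; rfl
    rw [hfin, hmm, roots_multiset_prod_X_sub_C]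

/-- for symmetric S, C with |c_{ij}| ≤ s_{ij} and 0 ≤ γ ≤ 1, the block
matrix M_γ is symmetric, nonnegative, with eigenvalue multiset σ(S) ∪ γ·σ(C). -/
theorem stmt7 (n : ℕ) (s c : Fin n → Fin n → ℝ)
    (hs : ∀ i j, s i j = s j i) (hc : ∀ i j, c i j = c j i)
    (h : ∀ i j, |c i j| ≤ s i j) (γ : ℝ) (h0 : 0 ≤ γ) (h1 : γ ≤ 1)
    (M : Matrix (Fin n × Fin 2) (Fin n × Fin 2) ℝ)
    (hM : ∀ (i j : Fin n) (p q : Fin 2), M (i, p) (j, q) =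
      if p = q then (s i j + γ * c i j) / 2 else (s i j - γ * c i j) / 2) :
    M.IsSymm ∧ (∀ u v, 0 ≤ M u v) ∧
      (M.map Complex.ofReal).charpoly.roots =
        ((Matrix.of s).map Complex.ofReal).charpoly.roots +
          Multiset.map (fun z => (γ : ℂ) * z)
            ((Matrix.of c).map Complex.ofReal).charpoly.roots := by
  have habs : ∀ i j, γ * c i j ≤ s i j ∧ -(s i j) ≤ γ * c i j := by
    intro i j
    have h2 : γ * |c i j| ≤ s i j :=
      le_trans (mul_le_of_le_one_left (abs_nonneg _) h1) (h i j)
    have h3 : γ * c i j ≤ γ * |c i j| :=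
      mul_le_mul_of_nonneg_left (le_abs_self _) h0
    have h4 : γ * (-|c i j|) ≤ γ * c i j :=
      mul_le_mul_of_nonneg_left (neg_abs_le _) h0
    constructor
    · linarith
    · nlinarith
  refine ⟨?_, ?_, ?_⟩
  · ext ⟨i, p⟩ ⟨j, q⟩
    rw [Matrix.transpose_apply, hM, hM, hs j i, hc j i]
    simp only [eq_comm]
  · rintro ⟨i, p⟩ ⟨j, q⟩
    rw [hM]
    obtain ⟨ha, hb⟩ := habs i j
    split_ifs <;> linarith
  · -- the eigenvalue part
    set A : Matrix (Fin n) (Fin n) ℂ :=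
      Matrix.of fun i j => (((s i j + γ * c i j) / 2 : ℝ) : ℂ) with hA
    set B : Matrix (Fin n) (Fin n) ℂ :=
      Matrix.of fun i j => (((s i j - γ * c i j) / 2 : ℝ) : ℂ) with hB
    set e : Fin n × Fin 2 ≃ Fin n ⊕ Fin n :=
      { toFun := fun x => if x.2 = 0 then Sum.inl x.1 else Sum.inr x.1
        invFun := Sum.elim (fun i => (i, 0)) (fun i => (i, 1))
        left_inv := by rintro ⟨i, p⟩; fin_cases p <;> simp
        right_inv := by rintro (i | i) <;> simp } with he
    have hre : Matrix.reindex e e (M.map Complex.ofReal) = Matrix.fromBlocks A B B A := by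
      ext u v
      rcases u with i | i <;> rcases v with j | j <;>
        simp [he, Matrix.reindex_apply, Matrix.submatrix_apply, Matrix.map_apply, hM, hA, hB,
          Matrix.fromBlocks]
    have hcp : (M.map Complex.ofReal).charpoly = (A + B).charpoly * (A - B).charpoly := by
      rw [← Matrix.charpoly_reindex e (M.map Complex.ofReal), hre, charpoly_fromBlocks_self]
    have hAB1 : A + B = (Matrix.of s).map Complex.ofReal := by
      ext i j
      simp only [Matrix.add_apply, hA, hB, Matrix.of_apply, Matrix.map_apply]
      push_cast
      ring
    have hAB2 : A - B = (γ : ℂ) • ((Matrix.of c).map Complex.ofReal) := by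
      ext i j
      simp only [Matrix.sub_apply, hA, hB, Matrix.of_apply, Matrix.map_apply,
        Matrix.smul_apply, smul_eq_mul]
      push_cast
      ring
    rw [hcp, hAB1, hAB2]
    rw [Polynomial.roots_mul (mul_ne_zero (Matrix.charpoly_monic _).ne_zero
      (Matrix.charpoly_monic _).ne_zero)]
    rw [roots_charpoly_smul]
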